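/- Consider the finite LP: minimize f + Σ_ℓ Σ_{n∈C_ℓ} y_{ℓ,n}/S_{ℓ,n} subject to Σ_{n∈C_ℓ} x_{ℓ,n}/R_{ℓ,n} ≤ f for all ℓ, x_{ℓ,n} + y_{ℓ,n} ≥ D_n, and f, x_{ℓ,n}, y_{ℓ,n} ≥ 0. There exist thresholds ρ_ℓ > 0 such that in some optimal solution, x_{ℓ,n} = D_n whenever R_{ℓ,n}/S_{ℓ,n} > ρ_ℓ and y_{ℓ,n} = D_n whenever R_{ℓ,n}/S_{ℓ,n} < ρ_ℓ; both x_{ℓ,n} and y_{ℓ,n} can be positive only if R_{ℓ,n}/S_{ℓ,n} = ρ_ℓ. -/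

import Mathlib

open Finset

/-- the finite LP (minimize `f + Σ y_n/S_n` over `f, x, y ≥ 0` with
`Σ_{n∈C_ℓ} x_n/R_n ≤ f` and `x_n + y_n ≥ D_n`) has an optimal solution of
rate-ratio threshold form: there are thresholds `ρ_ℓ > 0` such that `x_n = D_n`
when `R_n/S_n > ρ_ℓ`, `y_n = D_n` when `R_n/S_n < ρ_ℓ`, and `x_n, y_n` can both be
positive only when `R_n/S_n = ρ_ℓ`. -/
theorem finiteLP_rate_ratio_structure
    (Nu L : ℕ) (cell : Fin Nu → Fin L)
    (R S Dd : Fin Nu → ℝ)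
    (hR : ∀ n, 0 < R n) (hS : ∀ n, 0 < S n) (hD : ∀ n, 0 < Dd n) :
    ∃ ρ : Fin L → ℝ, (∀ ℓ, 0 < ρ ℓ) ∧
    ∃ (f : ℝ) (x y : Fin Nu → ℝ),
      -- feasibility
      0 ≤ f ∧ (∀ n, 0 ≤ x n) ∧ (∀ n, 0 ≤ y n) ∧
      (∀ n, Dd n ≤ x n + y n) ∧
      (∀ ℓ : Fin L, ∑ n ∈ univ.filter (fun n => cell n = ℓ), x n / R n ≤ f) ∧
      -- optimality
      (∀ (f' : ℝ) (x' y' : Fin Nu → ℝ),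
        0 ≤ f' → (∀ n, 0 ≤ x' n) → (∀ n, 0 ≤ y' n) →
        (∀ n, Dd n ≤ x' n + y' n) →
        (∀ ℓ : Fin L, ∑ n ∈ univ.filter (fun n => cell n = ℓ), x' n / R n ≤ f') →
        f + ∑ n, y n / S n ≤ f' + ∑ n, y' n / S n) ∧
      -- threshold structure
      (∀ n, ρ (cell n) < R n / S n → x n = Dd n) ∧
      (∀ n, R n / S n < ρ (cell n) → y n = Dd n) ∧
      (∀ n, 0 < x n → 0 < y n → R n / S n = ρ (cell n)) := by
  classical
  set V0 : ℝ := ∑ k, Dd k / S k with hV0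
  have hV0nn : 0 ≤ V0 :=
    Finset.sum_nonneg fun k _ => le_of_lt (div_pos (hD k) (hS k))
  -- the objective function on pairs (f, x) with y = Dd - x
  set g : ℝ × (Fin Nu → ℝ) → ℝ := fun p => p.1 + ∑ k, (Dd k - p.2 k) / S k with hg
  -- the (normalized) compact feasible region
  set K : Set (ℝ × (Fin Nu → ℝ)) :=
    {p | p.1 ∈ Set.Icc 0 V0 ∧ (∀ k, p.2 k ∈ Set.Icc 0 (Dd k)) ∧
      ∀ ℓ : Fin L, ∑ n ∈ univ.filter (fun n => cell n = ℓ), p.2 n / R n ≤ p.1} with hK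
  have hKclosed : IsClosed K := by
    have h1 : IsClosed {p : ℝ × (Fin Nu → ℝ) | p.1 ∈ Set.Icc 0 V0} :=
      isClosed_Icc.preimage continuous_fst
    have h2 : ∀ k : Fin Nu, IsClosed {p : ℝ × (Fin Nu → ℝ) | p.2 k ∈ Set.Icc 0 (Dd k)} :=
      fun k => isClosed_Icc.preimage ((continuous_apply k).comp continuous_snd)
    have h3 : ∀ ℓ : Fin L, IsClosed {p : ℝ × (Fin Nu → ℝ) |
        ∑ n ∈ univ.filter (fun n => cell n = ℓ), p.2 n / R n ≤ p.1} := by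
      intro ℓ
      apply isClosed_le
      · exact continuous_finset_sum _ fun n _ =>
          ((continuous_apply n).comp continuous_snd).div_const _
      · exact continuous_fst
    have hKeq : K = {p : ℝ × (Fin Nu → ℝ) | p.1 ∈ Set.Icc 0 V0} ∩
        ((⋂ k, {p : ℝ × (Fin Nu → ℝ) | p.2 k ∈ Set.Icc 0 (Dd k)}) ∩
         (⋂ ℓ, {p : ℝ × (Fin Nu → ℝ) |
            ∑ n ∈ univ.filter (fun n => cell n = ℓ), p.2 n / R n ≤ p.1})) := by
      ext p
      simp only [hK, Set.mem_setOf_eq, Set.mem_inter_iff, Set.mem_iInter]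
      all_goals tauto
    rw [hKeq]
    exact h1.inter ((isClosed_iInter h2).inter (isClosed_iInter h3))
  have hKcomp : IsCompact K := by
    have hsub : K ⊆ (Set.Icc 0 V0) ×ˢ (Set.Icc (0 : Fin Nu → ℝ) Dd) := by
      intro p hp
      refine Set.mem_prod.mpr ⟨hp.1, ?_⟩
      constructor
      · intro k; exact (hp.2.1 k).1
      · intro k; exact (hp.2.1 k).2
    exact (isCompact_Icc.prod isCompact_Icc).of_isClosed_subset hKclosed hsub
  have hKne : K.Nonempty := by
    refine ⟨(0, 0), ⟨⟨le_refl _, hV0nn⟩, fun k => ⟨le_refl _, le_of_lt (hD k)⟩, ?_⟩⟩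
    intro ℓ
    simp
  have hgcont : Continuous g := by
    apply continuous_fst.add
    exact continuous_finset_sum _ fun k _ =>
      (continuous_const.sub ((continuous_apply k).comp continuous_snd)).div_const _
  obtain ⟨p, hpK, hpmin⟩ := hKcomp.exists_isMinOn hKne hgcont.continuousOn
  have hmin : ∀ q ∈ K, g p ≤ g q := fun q hq => hpmin hq
  -- the exchange argument: at the minimizer, within a cell, a user with strictly
  -- smaller ratio cannot receive pico service while one with larger ratio is unserved
  have hexch : ∀ n m : Fin Nu, cell m = cell n → R m / S m < R n / S n →
      p.2 n < Dd n → 0 < p.2 m → False := by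
    intro n m hcmn hrlt hxn hxm
    have hnm : n ≠ m := by
      intro h; rw [h] at hrlt; exact lt_irrefl _ hrlt
    set ε : ℝ := min ((Dd n - p.2 n) / R n) (p.2 m / R m) with hε
    have hεpos : 0 < ε :=
      lt_min (div_pos (by linarith) (hR n)) (div_pos hxm (hR m))
    have hεn : ε * R n ≤ Dd n - p.2 n := by
      have h := min_le_left ((Dd n - p.2 n) / R n) (p.2 m / R m)
      calc ε * R n ≤ ((Dd n - p.2 n) / R n) * R n :=
            mul_le_mul_of_nonneg_right h (le_of_lt (hR n))
        _ = Dd n - p.2 n := div_mul_cancel₀ _ (ne_of_gt (hR n))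
    have hεm : ε * R m ≤ p.2 m := by
      have h := min_le_right ((Dd n - p.2 n) / R n) (p.2 m / R m)
      calc ε * R m ≤ (p.2 m / R m) * R m :=
            mul_le_mul_of_nonneg_right h (le_of_lt (hR m))
        _ = p.2 m := div_mul_cancel₀ _ (ne_of_gt (hR m))
    set q2 : Fin Nu → ℝ :=
      fun k => if k = n then p.2 n + ε * R n else if k = m then p.2 m - ε * R m else p.2 k
      with hq2
    have hq2n : q2 n = p.2 n + ε * R n := by simp [hq2]
    have hq2m : q2 m = p.2 m - ε * R m := by simp [hq2, hnm.symm]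
    have hq2o : ∀ k, k ≠ n → k ≠ m → q2 k = p.2 k := by
      intro k h1 h2; simp [hq2, h1, h2]
    -- the pico-time sums are unchanged
    have hsum_eq : ∀ ℓ : Fin L,
        ∑ k ∈ univ.filter (fun k => cell k = ℓ), q2 k / R k =
        ∑ k ∈ univ.filter (fun k => cell k = ℓ), p.2 k / R k := by
      intro ℓ
      by_cases hc : ℓ = cell n
      · subst hc
        have hns : n ∈ univ.filter (fun k => cell k = cell n) := by simp
        have hms : m ∈ univ.filter (fun k => cell k = cell n) := by simp [hcmn]
        have h1 : ∀ k ∈ univ.filter (fun k => cell k = cell n),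
            q2 k / R k = p.2 k / R k + ((if k = n then ε else 0) - (if k = m then ε else 0)) := by
          intro k _
          by_cases hkn : k = n
          · rw [hkn, hq2n, if_pos rfl, if_neg hnm, add_div, mul_div_assoc,
              div_self (ne_of_gt (hR n)), mul_one]
            ring
          · by_cases hkm : k = m
            · rw [hkm, hq2m, if_neg (hkm ▸ hkn : m ≠ n), if_pos rfl, sub_div, mul_div_assoc,
                div_self (ne_of_gt (hR m)), mul_one]
              ring
            · rw [hq2o k hkn hkm, if_neg hkn, if_neg hkm]
              ring
        rw [Finset.sum_congr rfl h1, Finset.sum_add_distrib, Finset.sum_sub_distrib,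
          Finset.sum_ite_eq' _ n (fun _ => ε), Finset.sum_ite_eq' _ m (fun _ => ε),
          if_pos hns, if_pos hms]
        ring
      · apply Finset.sum_congr rfl
        intro k hk
        simp only [Finset.mem_filter] at hk
        have hkn : k ≠ n := by intro h; apply hc; rw [← hk.2, h]
        have hkm : k ≠ m := by intro h; apply hc; rw [← hk.2, h, hcmn]
        rw [hq2o k hkn hkm]
    have hqK : (p.1, q2) ∈ K := by
      refine ⟨hpK.1, ?_, ?_⟩
      · intro k
        show q2 k ∈ Set.Icc 0 (Dd k)
        rw [Set.mem_Icc]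
        by_cases hkn : k = n
        · rw [hkn, hq2n]
          have h1 : 0 ≤ p.2 n := (hpK.2.1 n).1
          have h2 := mul_pos hεpos (hR n)
          constructor <;> linarith
        · by_cases hkm : k = m
          · rw [hkm, hq2m]
            have h1 : p.2 m ≤ Dd m := (hpK.2.1 m).2
            have h2 := mul_pos hεpos (hR m)
            constructor <;> linarith
          · rw [hq2o k hkn hkm, ← Set.mem_Icc]; exact hpK.2.1 k
      · intro ℓ
        show ∑ n ∈ univ.filter (fun n => cell n = ℓ), q2 n / R n ≤ p.1
        rw [hsum_eq ℓ]
        exact hpK.2.2 ℓ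
    -- but the objective strictly decreases
    have hobj : ∑ k, (Dd k - q2 k) / S k =
        (∑ k, (Dd k - p.2 k) / S k) + (ε * (R m / S m) - ε * (R n / S n)) := by
      have h1 : ∀ k ∈ (univ : Finset (Fin Nu)),
          (Dd k - q2 k) / S k = (Dd k - p.2 k) / S k +
            ((if k = m then ε * (R m / S m) else 0) - (if k = n then ε * (R n / S n) else 0)) := by
        intro k _
        by_cases hkn : k = n
        · rw [hkn, hq2n, if_neg hnm, if_pos rfl]
          have h : Dd n - (p.2 n + ε * R n) = (Dd n - p.2 n) - ε * R n := by ring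
          rw [h, sub_div, mul_div_assoc]
          ring
        · by_cases hkm : k = m
          · rw [hkm, hq2m, if_pos rfl, if_neg (hkm ▸ hkn : m ≠ n)]
            have h : Dd m - (p.2 m - ε * R m) = (Dd m - p.2 m) + ε * R m := by ring
            rw [h, add_div, mul_div_assoc]
            ring
          · rw [hq2o k hkn hkm, if_neg hkm, if_neg hkn]
            ring
      rw [Finset.sum_congr rfl h1, Finset.sum_add_distrib, Finset.sum_sub_distrib,
        Finset.sum_ite_eq' _ m (fun _ => ε * (R m / S m)),
        Finset.sum_ite_eq' _ n (fun _ => ε * (R n / S n)),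
        if_pos (Finset.mem_univ m), if_pos (Finset.mem_univ n)]
      all_goals ring
    have hlt : g (p.1, q2) < g p := by
      have e1 : g (p.1, q2) = p.1 + ∑ k, (Dd k - q2 k) / S k := rfl
      have e2 : g p = p.1 + ∑ k, (Dd k - p.2 k) / S k := rfl
      rw [e1, e2, hobj]
      have := mul_lt_mul_of_pos_left hrlt hεpos
      linarith
    exact absurd (hmin _ hqK) (not_le.mpr hlt)
  -- now define the thresholds
  set T : Fin L → Finset (Fin Nu) :=
    fun ℓ => univ.filter (fun k => cell k = ℓ ∧ p.2 k < Dd k) with hT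
  set Cs : Fin L → Finset (Fin Nu) :=
    fun ℓ => univ.filter (fun k => cell k = ℓ) with hCs
  set r : Fin Nu → ℝ := fun k => R k / S k with hr
  have hrpos : ∀ k, 0 < r k := fun k => div_pos (hR k) (hS k)
  set ρ : Fin L → ℝ := fun ℓ =>
    if h : (T ℓ).Nonempty then (T ℓ).sup' h r
    else if h2 : (Cs ℓ).Nonempty then (Cs ℓ).inf' h2 r else 1 with hρ
  have hρpos : ∀ ℓ, 0 < ρ ℓ := by
    intro ℓ
    simp only [hρ]
    by_cases h : (T ℓ).Nonempty
    · rw [dif_pos h]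
      obtain ⟨b, hb⟩ := h
      exact lt_of_lt_of_le (hrpos b) (Finset.le_sup' r hb)
    · rw [dif_neg h]
      by_cases h2 : (Cs ℓ).Nonempty
      · rw [dif_pos h2]
        exact (Finset.lt_inf'_iff h2).mpr fun b _ => hrpos b
      · rw [dif_neg h2]; norm_num
  have hy0 : ∀ k, (0:ℝ) ≤ Dd k - p.2 k := fun k => by linarith [(hpK.2.1 k).2]
  have hxy : ∀ k, Dd k ≤ p.2 k + (Dd k - p.2 k) := fun k => by linarith
  refine ⟨ρ, hρpos, p.1, p.2, fun k => Dd k - p.2 k, hpK.1.1,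
    fun k => (hpK.2.1 k).1, fun k => hy0 k, fun k => hxy k,
    hpK.2.2, ?_, ?_, ?_, ?_⟩
  · -- optimality
    intro f' x' y' hf' hx' hy' hxy' hfeas'
    have hgoal : g p ≤ f' + ∑ n, y' n / S n := by
      by_cases hcase : f' ≤ V0
      · set q2 : Fin Nu → ℝ := fun k => min (x' k) (Dd k) with hq2
        have hqK : (f', q2) ∈ K := by
          refine ⟨⟨hf', hcase⟩, ?_, ?_⟩
          · intro k
            exact ⟨le_min (hx' k) (le_of_lt (hD k)), min_le_right _ _⟩
          · intro ℓ
            show ∑ n ∈ univ.filter (fun n => cell n = ℓ), q2 n / R n ≤ f'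
            refine le_trans (Finset.sum_le_sum ?_) (hfeas' ℓ)
            intro k _
            gcongr
            · exact (hR k).le
            · exact min_le_left _ _
        have h1 : g (f', q2) ≤ f' + ∑ n, y' n / S n := by
          have e1 : g (f', q2) = f' + ∑ k, (Dd k - q2 k) / S k := rfl
          rw [e1]
          have hsum : ∀ k ∈ (univ : Finset (Fin Nu)), (Dd k - q2 k) / S k ≤ y' k / S k := by
            intro k _
            have hnum : Dd k - q2 k ≤ y' k := by
              rcases le_total (x' k) (Dd k) with h | h
              · have e2 : q2 k = x' k := min_eq_left h
                rw [e2]; linarith [hxy' k]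
              · have e2 : q2 k = Dd k := min_eq_right h
                rw [e2]; linarith [hy' k]
            exact (div_le_div_iff_of_pos_right (hS k)).mpr hnum
          exact add_le_add_right (Finset.sum_le_sum hsum) f'
        exact le_trans (hmin _ hqK) h1
      · have h0 : g p ≤ g (0, 0) := by
          apply hmin
          refine ⟨⟨le_refl _, hV0nn⟩, fun k => ⟨le_refl _, le_of_lt (hD k)⟩, ?_⟩
          intro ℓ; simp
        have h1 : g ((0:ℝ), (0 : Fin Nu → ℝ)) = V0 := by
          show (0:ℝ) + ∑ k, (Dd k - (0 : Fin Nu → ℝ) k) / S k = V0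
          simp [hV0]
        have h2 : (0:ℝ) ≤ ∑ n, y' n / S n :=
          Finset.sum_nonneg fun k _ => div_nonneg (hy' k) (le_of_lt (hS k))
        push_neg at hcase
        calc g p ≤ V0 := by rw [← h1]; exact h0
          _ ≤ f' + ∑ n, y' n / S n := by linarith
    have e2 : g p = p.1 + ∑ k, (Dd k - p.2 k) / S k := rfl
    rw [e2] at hgoal
    exact hgoal
  · -- x n = Dd n when ratio above threshold
    intro n hlt
    by_contra hne
    have hxn : p.2 n < Dd n := lt_of_le_of_ne (hpK.2.1 n).2 hne
    have hnT : n ∈ T (cell n) := by simp [hT, hxn]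
    have hTne : (T (cell n)).Nonempty := ⟨n, hnT⟩
    have hle : r n ≤ ρ (cell n) := by
      simp only [hρ]
      rw [dif_pos hTne]
      exact Finset.le_sup' r hnT
    exact absurd hlt (not_lt.mpr hle)
  · -- y n = Dd n when ratio below threshold
    intro n hlt
    have hx0 : p.2 n = 0 := by
      by_contra hne
      have hxn : 0 < p.2 n := lt_of_le_of_ne (hpK.2.1 n).1 (Ne.symm hne)
      by_cases hTne : (T (cell n)).Nonempty
      · obtain ⟨k, hkT, hk⟩ := (T (cell n)).exists_mem_eq_sup' hTne r
        simp only [hT, Finset.mem_filter, Finset.mem_univ, true_and] at hkT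
        have hρeq : ρ (cell n) = r k := by
          simp only [hρ]; rw [dif_pos hTne]; exact hk
        rw [hρeq] at hlt
        exact hexch k n hkT.1.symm hlt hkT.2 hxn
      · have hnC : n ∈ Cs (cell n) := by simp [hCs]
        have hCne : (Cs (cell n)).Nonempty := ⟨n, hnC⟩
        have hge : ρ (cell n) ≤ r n := by
          simp only [hρ]
          rw [dif_neg hTne, dif_pos hCne]
          exact Finset.inf'_le r hnC
        exact absurd hlt (not_lt.mpr hge)
    show Dd n - p.2 n = Dd n
    rw [hx0, sub_zero]
  · -- both positive only at the threshold
    intro n hxpos hypos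
    have hxn : p.2 n < Dd n := by
      have : (0:ℝ) < Dd n - p.2 n := hypos
      linarith
    have hnT : n ∈ T (cell n) := by simp [hT, hxn]
    have hTne : (T (cell n)).Nonempty := ⟨n, hnT⟩
    have hle : r n ≤ ρ (cell n) := by
      simp only [hρ]
      rw [dif_pos hTne]
      exact Finset.le_sup' r hnT
    obtain ⟨k, hkT, hk⟩ := (T (cell n)).exists_mem_eq_sup' hTne r
    simp only [hT, Finset.mem_filter, Finset.mem_univ, true_and] at hkT
    have hρeq : ρ (cell n) = r k := by
      simp only [hρ]; rw [dif_pos hTne]; exact hk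
    have hge : ρ (cell n) ≤ r n := by
      rw [hρeq]
      by_contra hgt
      push_neg at hgt
      exact hexch k n hkT.1.symm hgt hkT.2 hxpos
    exact le_antisymm hle hge
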